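/- For x ∈ (0,1), the function y ↦ ((2+y)ln(2+y) - (1+y)ln(1+y) - 2 ln 2) - ((x+y)ln(x+y) - x ln x - y ln y), defined on (0,∞), has a unique minimizer at y = x/(1-x), and its minimum value equals -( 2 ln 2 + (1-x)ln(1-x) - (2-x)ln(2-x) ). -/

import Mathlib

open Real

private lemma hasDerivAt_shift_mul_log (c y : ℝ) (h : c + y ≠ 0) :
    HasDerivAt (fun t => (c + t) * log (c + t)) (log (c + y) + 1) y := by
  have h1 : HasDerivAt (fun t : ℝ => c + t) 1 y := (hasDerivAt_id y).const_add c
  have := (Real.hasDerivAt_mul_log h).comp y h1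
  rw [mul_one] at this
  exact this

/-- For `x ∈ (0,1)`, `y ↦ 𝒰^Dyck(y) - U(x,y)` on `(0,∞)` has unique minimizer
`y = x/(1-x)` with minimum value `-I^Dyck(x)`. -/
theorem VDyck_unique_min (x : ℝ) (hx : x ∈ Set.Ioo (0 : ℝ) 1) :
    (∀ y ∈ Set.Ioi (0 : ℝ), y ≠ x / (1 - x) →
      (((2 + x / (1 - x)) * log (2 + x / (1 - x)) - (1 + x / (1 - x)) * log (1 + x / (1 - x))
          - 2 * log 2)
        - ((x + x / (1 - x)) * log (x + x / (1 - x)) - x * log x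
          - (x / (1 - x)) * log (x / (1 - x))))
      < (((2 + y) * log (2 + y) - (1 + y) * log (1 + y) - 2 * log 2)
        - ((x + y) * log (x + y) - x * log x - y * log y))) ∧
    (((2 + x / (1 - x)) * log (2 + x / (1 - x)) - (1 + x / (1 - x)) * log (1 + x / (1 - x))
        - 2 * log 2)
      - ((x + x / (1 - x)) * log (x + x / (1 - x)) - x * log x
        - (x / (1 - x)) * log (x / (1 - x))))
      = -(2 * log 2 + (1 - x) * log (1 - x) - (2 - x) * log (2 - x)) := by
  obtain ⟨hx0, hx1⟩ := hx
  have h1x : 0 < 1 - x := by linarith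
  have h2x : 0 < 2 - x := by linarith
  set y0 := x / (1 - x) with hy0def
  have hy0 : 0 < y0 := div_pos hx0 h1x
  have hy0x : (1 - x) * y0 = x := by rw [hy0def]; field_simp
  set f : ℝ → ℝ := fun y => ((2 + y) * log (2 + y) - (1 + y) * log (1 + y) - 2 * log 2)
      - ((x + y) * log (x + y) - x * log x - y * log y) with hfdef
  have hder : ∀ y : ℝ, 0 < y → HasDerivAt f
      (log (2 + y) - log (1 + y) - (log (x + y) - log y)) y := by
    intro y hy
    have h2 : (2:ℝ) + y ≠ 0 := by linarith
    have h1 : (1:ℝ) + y ≠ 0 := by linarith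
    have hxy : x + y ≠ 0 := by linarith
    have d2 := hasDerivAt_shift_mul_log 2 y h2
    have d1 := hasDerivAt_shift_mul_log 1 y h1
    have dx := hasDerivAt_shift_mul_log x y hxy
    have dy := Real.hasDerivAt_mul_log hy.ne'
    have H := ((d2.sub d1).sub_const (2 * log 2)).sub ((dx.sub_const (x * log x)).sub dy)
    refine H.congr_deriv ?_
    ring
  have hcont : ContinuousOn f (Set.Ioi 0) :=
    fun y hy => (hder y hy).continuousAt.continuousWithinAt
  -- key sign fact
  have hsign : ∀ y : ℝ, 0 < y →
      log (2 + y) - log (1 + y) - (log (x + y) - log y)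
        = log ((2 + y) * y) - log ((1 + y) * (x + y)) := by
    intro y hy
    rw [Real.log_mul (by linarith) hy.ne', Real.log_mul (by linarith) (by linarith)]
    ring
  have hanti : StrictAntiOn f (Set.Ioc 0 y0) := by
    apply strictAntiOn_of_deriv_neg (convex_Ioc 0 y0)
      (hcont.mono Set.Ioc_subset_Ioi_self)
    intro y hy
    rw [interior_Ioc] at hy
    obtain ⟨hy1, hy2⟩ := hy
    rw [(hder y hy1).deriv, hsign y hy1]
    have hlt : (2 + y) * y < (1 + y) * (x + y) := by nlinarith
    have := Real.log_lt_log (by nlinarith) hlt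
    linarith
  have hmono : StrictMonoOn f (Set.Ici y0) := by
    apply strictMonoOn_of_deriv_pos (convex_Ici y0)
      (hcont.mono (fun y hy => lt_of_lt_of_le hy0 hy))
    intro y hy
    rw [interior_Ici, Set.mem_Ioi] at hy
    have hy1 : 0 < y := lt_trans hy0 hy
    rw [(hder y hy1).deriv, hsign y hy1]
    have hlt : (1 + y) * (x + y) < (2 + y) * y := by nlinarith
    have := Real.log_lt_log (by nlinarith) hlt
    linarith
  constructor
  · intro y hy hne
    rw [Set.mem_Ioi] at hy
    have : f y0 < f y := by
      rcases lt_or_gt_of_ne hne with h | h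
      · exact hanti ⟨hy, h.le⟩ ⟨hy0, le_refl y0⟩ h
      · exact hmono (le_refl y0) h.le h
    exact this
  · -- value at the minimizer
    have l2 : log (2 + y0) = log (2 - x) - log (1 - x) := by
      rw [show 2 + y0 = (2 - x) / (1 - x) by rw [hy0def]; field_simp; ring,
        Real.log_div h2x.ne' h1x.ne']
    have l1 : log (1 + y0) = -log (1 - x) := by
      rw [show 1 + y0 = (1 - x)⁻¹ by rw [hy0def]; field_simp; ring, Real.log_inv]
    have lxy : log (x + y0) = log x + log (2 - x) - log (1 - x) := by
      rw [show x + y0 = x * (2 - x) / (1 - x) by rw [hy0def]; field_simp; ring,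
        Real.log_div (mul_ne_zero hx0.ne' h2x.ne') h1x.ne',
        Real.log_mul hx0.ne' h2x.ne']
    have ly : log y0 = log x - log (1 - x) := by
      rw [hy0def, Real.log_div hx0.ne' h1x.ne']
    show f y0 = _
    rw [hfdef]
    simp only
    rw [l2, l1, lxy, ly, hy0def]
    field_simp
    ring
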